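/- arXiv:1010.5335 — 4 statements merged into one kernel-verified Lean document; each statement's English description precedes it below -/
import Mathlib

section
/- Let N ≥ 3 be odd and φ ∈ ℝ^N. If θ (with θ_N = 0) is a stationary point of F_φ, then there exist q_1,…,q_{N−1} ∈ {0,1} and an integer l such that, setting D := 1 + Σ_{k=1}^{N−1} (−1)^{q_k} (which is a nonzero odd integer since N is odd) and σ := (Φ + 2πl − π Σ_{k=1}^{N−1} q_k)/D, one has s_N ≡ σ (mod 2π) and s_k ≡ (−1)^{q_k} σ + q_k π (mod 2π) for every k = 1,…,N−1. Conversely, for every choice of q_1,…,q_{N−1} ∈ {0,1} and l ∈ ℤ, the configuration θ (with θ_N = 0) determined by these congruences is a stationary point of F_φ. -/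
open Real Filter

/-- The variable `s k = φ k + θ (k+1) - θ k` (indices cyclic mod `N`,
0-based; paper index `k` corresponds to `k-1` here, so `s_N` is `sVar` at `lastIdx`). -/
noncomputable def sVar (N : ℕ) (hN : 0 < N) (φ θ : Fin N → ℝ) (k : Fin N) : ℝ :=
  φ k + θ ⟨((k : ℕ) + 1) % N, Nat.mod_lt _ hN⟩ - θ k

/-- The lattice Landau gauge functional / random phase XY Hamiltonian
`F_φ(θ) = Σ_k (1 - cos(φ_k + θ_{k+1} - θ_k))` with periodic boundary conditions. -/
noncomputable def Fxy (N : ℕ) (hN : 0 < N) (φ θ : Fin N → ℝ) : ℝ :=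
  ∑ k : Fin N, (1 - Real.cos (sVar N hN φ θ k))

/-- The index of the fixed site (paper site `N`). -/
def lastIdx (N : ℕ) (hN : 0 < N) : Fin N :=
  ⟨N - 1, Nat.sub_lt hN Nat.one_pos⟩

/-- `θ` is a stationary point of `F_φ` regarded as a function of the free
coordinates `θ_1, …, θ_{N-1}` (0-based: coordinates `k` with `k < N-1`),
with `θ` at `lastIdx` held fixed: all partial derivatives vanish. -/
noncomputable def IsStationaryPt (N : ℕ) (hN : 0 < N) (φ θ : Fin N → ℝ) : Prop :=
  ∀ k : Fin N, (k : ℕ) < N - 1 →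
    deriv (fun t : ℝ => Fxy N hN φ (Function.update θ k t)) (θ k) = 0

/-- The `(N-1) × (N-1)` tridiagonal matrix with entries
`δ_{ij}(c_{i-1} + c_i) - δ_{i-1,j} c_{i-1} - δ_{i+1,j} c_i`, where indices are
0-based (paper index `i` ↦ `i-1`) and `c_0 := c_N` (cyclic predecessor). -/
noncomputable def hessC (N : ℕ) (hN : 0 < N) (c : Fin N → ℝ) :
    Matrix (Fin (N - 1)) (Fin (N - 1)) ℝ :=
  Matrix.of fun i j =>
    (if i = j then
        c ⟨((i : ℕ) + (N - 1)) % N, Nat.mod_lt _ hN⟩ +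
          c ⟨(i : ℕ), lt_of_lt_of_le i.isLt (Nat.sub_le N 1)⟩
      else 0)
    - (if (i : ℕ) = (j : ℕ) + 1 then c ⟨((i : ℕ) + (N - 1)) % N, Nat.mod_lt _ hN⟩ else 0)
    - (if (j : ℕ) = (i : ℕ) + 1 then c ⟨(i : ℕ), lt_of_lt_of_le i.isLt (Nat.sub_le N 1)⟩ else 0)

/-- The Hessian of `F_φ` (with the last coordinate fixed) at a configuration `θ`. -/
noncomputable def hessAt (N : ℕ) (hN : 0 < N) (φ θ : Fin N → ℝ) :
    Matrix (Fin (N - 1)) (Fin (N - 1)) ℝ :=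
  hessC N hN fun k => Real.cos (sVar N hN φ θ k)

/-- `F_φ` as a function of the free coordinates only: the coordinate at
`lastIdx` is overwritten by `0`. -/
noncomputable def FxyFixed (N : ℕ) (hN : 0 < N) (φ : Fin N → ℝ) (η : Fin N → ℝ) : ℝ :=
  Fxy N hN φ (Function.update η (lastIdx N hN) 0)

/-- The value `σ = (Φ + 2πl - π Σ_{k=1}^{N-1} q_k) / (1 + Σ_{k=1}^{N-1} (-1)^{q_k})`. -/
noncomputable def sigmaVal (N : ℕ) (hN : 0 < N) (φ : Fin N → ℝ) (q : Fin N → ℕ) (l : ℤ) : ℝ :=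
  ((∑ k, φ k) + 2 * Real.pi * (l : ℝ)
      - Real.pi * ∑ k ∈ Finset.univ.erase (lastIdx N hN), (q k : ℝ)) /
    (1 + ∑ k ∈ Finset.univ.erase (lastIdx N hN), (-1 : ℝ) ^ (q k))

namespace Stmt1Aux

/-- the cyclic predecessor -/
def predFin {N : ℕ} (hN : 0 < N) (j : Fin N) : Fin N :=
  ⟨((j : ℕ) + (N - 1)) % N, Nat.mod_lt _ hN⟩

lemma succ_val {N : ℕ} (k : Fin N) :
    ((k : ℕ) + 1) % N = if (k : ℕ) + 1 = N then 0 else (k : ℕ) + 1 := by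
  split
  · simp [*]
  · exact Nat.mod_eq_of_lt (by have := k.isLt; omega)

lemma pred_val {N : ℕ} (hN : 0 < N) (j : Fin N) :
    ((j : ℕ) + (N - 1)) % N = if (j : ℕ) = 0 then N - 1 else (j : ℕ) - 1 := by
  have hj := j.isLt
  split
  · rename_i h; rw [h]; simpa using Nat.mod_eq_of_lt (by omega)
  · rename_i h
    have h1 : (j : ℕ) + (N - 1) = N + ((j : ℕ) - 1) := by omega
    rw [h1, Nat.add_mod_left]
    exact Nat.mod_eq_of_lt (by omega)

lemma succ_eq_iff {N : ℕ} (hN : 0 < N) (k j : Fin N) :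
    (⟨((k : ℕ) + 1) % N, Nat.mod_lt _ hN⟩ : Fin N) = j ↔ k = predFin hN j := by
  have hk := k.isLt; have hj := j.isLt
  rw [Fin.ext_iff, Fin.ext_iff]
  show ((k : ℕ) + 1) % N = (j : ℕ) ↔ (k : ℕ) = ((j : ℕ) + (N - 1)) % N
  rw [succ_val, pred_val hN]
  split_ifs <;> omega

lemma succ_predFin {N : ℕ} (hN : 0 < N) (j : Fin N) :
    (⟨((predFin hN j : ℕ) + 1) % N, Nat.mod_lt _ hN⟩ : Fin N) = j :=
  (succ_eq_iff hN _ j).mpr rfl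

lemma succ_inj {N : ℕ} (hN : 0 < N) :
    Function.Injective (fun k : Fin N => (⟨((k : ℕ) + 1) % N, Nat.mod_lt _ hN⟩ : Fin N)) := by
  intro a b hab
  have h : ((a : ℕ) + 1) % N = ((b : ℕ) + 1) % N := congrArg Fin.val hab
  rw [succ_val, succ_val] at h
  have ha := a.isLt; have hb := b.isLt
  apply Fin.ext
  split_ifs at h <;> omega


lemma hasDerivAt_term {N : ℕ} (hN : 0 < N) (φ θ : Fin N → ℝ) (j k : Fin N) :
    HasDerivAt (fun t => 1 - Real.cos (sVar N hN φ (Function.update θ j t) k))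
      (((if (⟨((k : ℕ) + 1) % N, Nat.mod_lt _ hN⟩ : Fin N) = j then (1 : ℝ) else 0)
          - if k = j then 1 else 0) * Real.sin (sVar N hN φ θ k)) (θ j) := by
  set ks : Fin N := ⟨((k : ℕ) + 1) % N, Nat.mod_lt _ hN⟩ with hks
  set e : ℝ := (if ks = j then (1 : ℝ) else 0) - if k = j then 1 else 0 with he
  set c : ℝ := φ k + (if ks = j then 0 else θ ks) - (if k = j then 0 else θ k) with hc
  have key : ∀ t : ℝ, sVar N hN φ (Function.update θ j t) k = c + e * t := by
    intro t
    show φ k + Function.update θ j t ks - Function.update θ j t k = c + e * t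
    rw [Function.update_apply, Function.update_apply, he, hc]
    split_ifs <;> ring
  have hfun : (fun t : ℝ => 1 - Real.cos (sVar N hN φ (Function.update θ j t) k))
      = fun t => 1 - Real.cos (c + e * t) := funext fun t => by rw [key]
  rw [hfun]
  have h1 : HasDerivAt (fun t : ℝ => c + e * t) e (θ j) := by
    simpa using ((hasDerivAt_id (θ j)).const_mul e).const_add c
  have h2 := (h1.cos).const_sub 1
  refine h2.congr_deriv ?_
  have hc' : c + e * θ j = sVar N hN φ θ k := by
    rw [← key (θ j), Function.update_eq_self]
  rw [hc']
  ring

lemma deriv_Fxy {N : ℕ} (hN : 0 < N) (φ θ : Fin N → ℝ) (j : Fin N) :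
    deriv (fun t : ℝ => Fxy N hN φ (Function.update θ j t)) (θ j)
      = Real.sin (sVar N hN φ θ (predFin hN j)) - Real.sin (sVar N hN φ θ j) := by
  have H : HasDerivAt (fun t : ℝ => Fxy N hN φ (Function.update θ j t))
      (∑ k : Fin N, ((if (⟨((k : ℕ) + 1) % N, Nat.mod_lt _ hN⟩ : Fin N) = j then (1 : ℝ) else 0)
          - if k = j then 1 else 0) * Real.sin (sVar N hN φ θ k)) (θ j) := by
    exact HasDerivAt.fun_sum fun k _ => hasDerivAt_term hN φ θ j k
  rw [H.deriv]
  simp only [sub_mul, ite_mul, one_mul, zero_mul, Finset.sum_sub_distrib]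
  congr 1
  · simp only [succ_eq_iff hN]
    simp [Finset.sum_ite_eq']
  · simp [Finset.sum_ite_eq']

lemma sum_sVar {N : ℕ} (hN : 0 < N) (φ θ : Fin N → ℝ) :
    ∑ k : Fin N, sVar N hN φ θ k = ∑ k, φ k := by
  have hb : Function.Bijective
      (fun k : Fin N => (⟨((k : ℕ) + 1) % N, Nat.mod_lt _ hN⟩ : Fin N)) :=
    Finite.injective_iff_bijective.mp (succ_inj hN)
  have hsum : ∑ k : Fin N, θ ⟨((k : ℕ) + 1) % N, Nat.mod_lt _ hN⟩ = ∑ k, θ k :=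
    Fintype.sum_bijective _ hb _ θ fun k => rfl
  simp only [sVar]
  rw [Finset.sum_sub_distrib, Finset.sum_add_distrib, hsum]
  ring

lemma sin_eq_sin {x y : ℝ} (h : Real.sin x = Real.sin y) :
    ∃ (q : ℕ) (m : ℤ), q ≤ 1 ∧ x = (-1 : ℝ) ^ q * y + q * π + 2 * π * m := by
  have h0 : 2 * Real.sin ((x - y) / 2) * Real.cos ((x + y) / 2) = 0 := by
    rw [← Real.sin_sub_sin]; linarith
  rcases mul_eq_zero.1 h0 with h1 | h2
  · have h1' : Real.sin ((x - y) / 2) = 0 := by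
      rcases mul_eq_zero.1 h1 with h | h
      · norm_num at h
      · exact h
    obtain ⟨n, hn⟩ := Real.sin_eq_zero_iff.1 h1'
    refine ⟨0, n, by norm_num, ?_⟩
    push_cast
    simp only [pow_zero]
    linarith
  · obtain ⟨n, hn⟩ := Real.cos_eq_zero_iff.1 h2
    refine ⟨1, n, le_refl 1, ?_⟩
    have hπ := Real.pi_pos
    push_cast
    simp only [pow_one]
    nlinarith [hn]

lemma sin_form (σ : ℝ) (q : ℕ) (hq : q ≤ 1) (m : ℤ) :
    Real.sin ((-1 : ℝ) ^ q * σ + q * π + 2 * π * m) = Real.sin σ := by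
  interval_cases q
  · rw [show (-1 : ℝ) ^ 0 * σ + (0 : ℕ) * π + 2 * π * m = σ + m * (2 * π) by push_cast; ring]
    exact Real.sin_add_int_mul_two_pi σ m
  · rw [show (-1 : ℝ) ^ 1 * σ + (1 : ℕ) * π + 2 * π * m = (π - σ) + m * (2 * π) by
      push_cast; ring]
    rw [Real.sin_add_int_mul_two_pi, Real.sin_pi_sub]

end Stmt1Aux

open Stmt1Aux

/-- classification of all stationary points of `F_φ` for odd `N`.
Forward: every stationary point (with `θ_N = 0`) is labelled by
`q_1, …, q_{N-1} ∈ {0,1}` and `l ∈ ℤ` with `s_N ≡ σ` and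
`s_k ≡ (-1)^{q_k} σ + q_k π (mod 2π)`, where
`σ = (Φ + 2πl - π Σ q_k)/(1 + Σ (-1)^{q_k})`.
Conversely, every configuration (with `θ_N = 0`) satisfying these congruences
is a stationary point. -/
theorem stmt1 (N : ℕ) (hN : 3 ≤ N) (hodd : Odd N) (φ : Fin N → ℝ) :
    (∀ θ : Fin N → ℝ, θ (lastIdx N (by omega)) = 0 → IsStationaryPt N (by omega) φ θ →
      ∃ (q : Fin N → ℕ) (l : ℤ), (∀ k, q k ≤ 1) ∧ q (lastIdx N (by omega)) = 0 ∧
        (∃ m : ℤ, sVar N (by omega) φ θ (lastIdx N (by omega)) =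
          sigmaVal N (by omega) φ q l + 2 * π * m) ∧
        (∀ k : Fin N, (k : ℕ) < N - 1 →
          ∃ m : ℤ, sVar N (by omega) φ θ k =
            (-1 : ℝ) ^ (q k) * sigmaVal N (by omega) φ q l + (q k : ℝ) * π + 2 * π * m))
    ∧
    (∀ (q : Fin N → ℕ) (l : ℤ), (∀ k, q k ≤ 1) → q (lastIdx N (by omega)) = 0 →
      ∀ θ : Fin N → ℝ, θ (lastIdx N (by omega)) = 0 →
        (∃ m : ℤ, sVar N (by omega) φ θ (lastIdx N (by omega)) =
          sigmaVal N (by omega) φ q l + 2 * π * m) →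
        (∀ k : Fin N, (k : ℕ) < N - 1 →
          ∃ m : ℤ, sVar N (by omega) φ θ k =
            (-1 : ℝ) ^ (q k) * sigmaVal N (by omega) φ q l + (q k : ℝ) * π + 2 * π * m) →
        IsStationaryPt N (by omega) φ θ) := by
  obtain ⟨u, hu⟩ := hodd
  have hN0 : 0 < N := by omega
  constructor
  · -- forward direction
    intro θ hθ hstat
    have hchain : ∀ j : Fin N, (j : ℕ) < N - 1 →
        Real.sin (sVar N hN0 φ θ (predFin hN0 j)) = Real.sin (sVar N hN0 φ θ j) := by
      intro j hj
      have h : deriv (fun t : ℝ => Fxy N hN0 φ (Function.update θ j t)) (θ j) = 0 :=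
        hstat j hj
      rw [deriv_Fxy hN0 φ θ j] at h
      linarith
    have hsinall : ∀ k : Fin N,
        Real.sin (sVar N hN0 φ θ k) = Real.sin (sVar N hN0 φ θ (lastIdx N hN0)) := by
      have key : ∀ n : ℕ, ∀ hn : n < N - 1,
          Real.sin (sVar N hN0 φ θ ⟨n, by omega⟩)
            = Real.sin (sVar N hN0 φ θ (lastIdx N hN0)) := by
        intro n
        induction n with
        | zero =>
          intro hn
          have h := hchain ⟨0, by omega⟩ hn
          have hp : predFin hN0 ⟨0, by omega⟩ = lastIdx N hN0 := by
            apply Fin.ext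
            show ((0 : ℕ) + (N - 1)) % N = N - 1
            simpa using Nat.mod_eq_of_lt (by omega)
          rw [hp] at h
          exact h.symm
        | succ n ih =>
          intro hn
          have h := hchain ⟨n + 1, by omega⟩ hn
          have hp : predFin hN0 ⟨n + 1, by omega⟩ = ⟨n, by omega⟩ := by
            apply Fin.ext
            show ((n + 1 : ℕ) + (N - 1)) % N = n
            have hmod : (n + 1 : ℕ) + (N - 1) = N + n := by omega
            rw [hmod, Nat.add_mod_left]
            exact Nat.mod_eq_of_lt (by omega)
          rw [hp] at h
          rw [← h]
          exact ih (by omega)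
      intro k
      by_cases hk : (k : ℕ) < N - 1
      · exact key k.1 hk
      · have hk' : k = lastIdx N hN0 := Fin.ext (by have := k.isLt; simp only [lastIdx]; omega)
        rw [hk']
    have hall : ∀ k : Fin N, ∃ (qk : ℕ) (mk : ℤ), qk ≤ 1 ∧
        (k = lastIdx N hN0 → qk = 0 ∧ mk = 0) ∧
        sVar N hN0 φ θ k
          = (-1 : ℝ) ^ qk * sVar N hN0 φ θ (lastIdx N hN0) + qk * π + 2 * π * mk := by
      intro k
      by_cases hk : k = lastIdx N hN0
      · subst hk
        exact ⟨0, 0, by norm_num, fun _ => ⟨rfl, rfl⟩, by norm_num⟩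
      · obtain ⟨qk, mk, hqk, heqk⟩ := sin_eq_sin (hsinall k)
        exact ⟨qk, mk, hqk, fun h => absurd h hk, heqk⟩
    choose q m hq hL heq using hall
    have hΦ : ∑ k, φ k
        = sVar N hN0 φ θ (lastIdx N hN0)
          + ((∑ k ∈ Finset.univ.erase (lastIdx N hN0), (-1 : ℝ) ^ (q k))
              * sVar N hN0 φ θ (lastIdx N hN0)
            + (∑ k ∈ Finset.univ.erase (lastIdx N hN0), (q k : ℝ)) * π
            + 2 * π * (∑ k ∈ Finset.univ.erase (lastIdx N hN0), (m k : ℝ))) := by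
      rw [← sum_sVar hN0 φ θ]
      rw [← Finset.add_sum_erase _ _ (Finset.mem_univ (lastIdx N hN0))]
      congr 1
      calc ∑ k ∈ Finset.univ.erase (lastIdx N hN0), sVar N hN0 φ θ k
          = ∑ k ∈ Finset.univ.erase (lastIdx N hN0),
              ((-1 : ℝ) ^ (q k) * sVar N hN0 φ θ (lastIdx N hN0) + (q k : ℝ) * π
                + 2 * π * (m k : ℝ)) := Finset.sum_congr rfl fun k _ => heq k
        _ = _ := by
            rw [Finset.sum_add_distrib, Finset.sum_add_distrib, ← Finset.sum_mul,
              ← Finset.sum_mul, ← Finset.mul_sum]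
    have hcard : (Finset.univ.erase (lastIdx N hN0)).card = N - 1 := by
      rw [Finset.card_erase_of_mem (Finset.mem_univ _)]
      simp
    obtain ⟨t, ht⟩ : (2 : ℤ) ∣ ∑ k ∈ Finset.univ.erase (lastIdx N hN0), ((-1 : ℤ) ^ (q k) - 1) := by
      apply Finset.dvd_sum
      intro k _
      rcases Nat.le_one_iff_eq_zero_or_eq_one.mp (hq k) with h | h <;> rw [h] <;> norm_num
    have hsum2 : ∑ k ∈ Finset.univ.erase (lastIdx N hN0), ((-1 : ℤ) ^ (q k))
        = 2 * t + ((N - 1 : ℕ) : ℤ) := by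
      have e1 : ∀ k ∈ Finset.univ.erase (lastIdx N hN0),
          ((-1 : ℤ) ^ (q k)) = ((-1 : ℤ) ^ (q k) - 1) + 1 := fun k _ => by ring
      rw [Finset.sum_congr rfl e1, Finset.sum_add_distrib, ht, Finset.sum_const, hcard]
      simp
    have hD : (1 : ℝ) + ∑ k ∈ Finset.univ.erase (lastIdx N hN0), (-1 : ℝ) ^ (q k) ≠ 0 := by
      have hAz : (∑ k ∈ Finset.univ.erase (lastIdx N hN0), (-1 : ℝ) ^ (q k))
          = ((∑ k ∈ Finset.univ.erase (lastIdx N hN0), ((-1 : ℤ) ^ (q k)) : ℤ) : ℝ) := by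
        push_cast; rfl
      rw [hAz]
      intro hc
      have hc' : (1 : ℤ) + ∑ k ∈ Finset.univ.erase (lastIdx N hN0), ((-1 : ℤ) ^ (q k)) = 0 := by
        exact_mod_cast hc
      rw [hsum2] at hc'
      omega
    have hσ : sigmaVal N hN0 φ q (-(∑ k ∈ Finset.univ.erase (lastIdx N hN0), m k))
        = sVar N hN0 φ θ (lastIdx N hN0) := by
      unfold sigmaVal
      rw [div_eq_iff hD]
      push_cast
      linear_combination hΦ
    refine ⟨q, -(∑ k ∈ Finset.univ.erase (lastIdx N hN0), m k), hq, (hL _ rfl).1, ⟨0, ?_⟩, ?_⟩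
    · show sVar N hN0 φ θ (lastIdx N hN0)
        = sigmaVal N hN0 φ q (-(∑ k ∈ Finset.univ.erase (lastIdx N hN0), m k)) + 2 * π * (0 : ℤ)
      rw [hσ]
      push_cast
      ring
    · intro k hk
      refine ⟨m k, ?_⟩
      show sVar N hN0 φ θ k
        = (-1 : ℝ) ^ (q k)
            * sigmaVal N hN0 φ q (-(∑ k ∈ Finset.univ.erase (lastIdx N hN0), m k))
          + (q k : ℝ) * π + 2 * π * (m k)
      rw [hσ]
      exact heq k
  · -- converse direction
    intro q l hq hqL θ hθ hlast hothers
    intro j hj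
    have hsin : ∀ k : Fin N,
        Real.sin (sVar N hN0 φ θ k) = Real.sin (sigmaVal N hN0 φ q l) := by
      intro k
      by_cases hk : (k : ℕ) < N - 1
      · obtain ⟨mm, hm⟩ := hothers k hk
        have hm' : sVar N hN0 φ θ k
            = (-1 : ℝ) ^ (q k) * sigmaVal N hN0 φ q l + (q k : ℝ) * π + 2 * π * mm := hm
        rw [hm']
        exact sin_form _ (q k) (hq k) mm
      · have hk' : k = lastIdx N hN0 := Fin.ext (by have := k.isLt; simp only [lastIdx]; omega)
        obtain ⟨mm, hm⟩ := hlast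
        have hm' : sVar N hN0 φ θ (lastIdx N hN0) = sigmaVal N hN0 φ q l + 2 * π * mm := hm
        rw [hk', hm']
        have h0 := sin_form (sigmaVal N hN0 φ q l) 0 (by norm_num) mm
        simpa using h0
    show deriv (fun t : ℝ => Fxy N hN0 φ (Function.update θ j t)) (θ j) = 0
    rw [deriv_Fxy hN0 φ θ j, hsin, hsin, sub_self]
end

section
/- For every odd integer N ≥ 3, the number of stationary points of F_φ satisfies Σ_{j=0}^{N−1} |N − 2j| · C(N−1, j) = N! / (((N−1)/2)!)², where C(N−1, j) denotes the binomial coefficient. -/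
open Real Filter

lemma stmt2Aux_key (n k : ℕ) : ((n:ℤ) - k) * n.choose k = (k+1) * n.choose (k+1) := by
  rcases le_or_gt k n with h | h
  · have h2 := congrArg (Nat.cast : ℕ → ℤ) (Nat.choose_succ_right_eq n k)
    push_cast [Nat.cast_sub h] at h2
    linarith
  · rw [Nat.choose_eq_zero_of_lt h, Nat.choose_eq_zero_of_lt (h.trans (Nat.lt_succ_self k))]
    simp

lemma stmt2Aux_tele (n k : ℕ) : ∑ j ∈ Finset.range (k+1), ((n:ℤ) - 2*j) * n.choose j
    = (k+1) * n.choose (k+1) := by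
  induction k with
  | zero => simp [Nat.choose_one_right]
  | succ k ih =>
    rw [Finset.sum_range_succ, ih]
    have hk := stmt2Aux_key n (k+1)
    push_cast at hk ⊢
    nlinarith [hk]


lemma stmt2Aux_halfsum (m : ℕ) :
    2 * ∑ j ∈ Finset.range (m+1), (2*m).choose j
      = (2*m).choose m + ∑ j ∈ Finset.range (2*m+1), (2*m).choose j := by
  have h1 : ∑ j ∈ Finset.range (m+1), (2*m).choose j
      = ∑ j ∈ Finset.range (m+1), (2*m).choose (m + j) := by
    rw [← Finset.sum_range_reflect (fun j => (2*m).choose (m + j)) (m+1)]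
    refine Finset.sum_congr rfl fun j hj => ?_
    rw [Finset.mem_range] at hj
    have e : m + (m + 1 - 1 - j) = 2*m - j := by omega
    rw [e, Nat.choose_symm (by omega)]
  have h2 : ∑ j ∈ Finset.range (m+1), (2*m).choose (m + j)
      = (2*m).choose m + ∑ i ∈ Finset.range m, (2*m).choose (m + 1 + i) := by
    rw [Finset.sum_range_succ', add_comm]
    congr 1
    refine Finset.sum_congr rfl fun i _ => ?_
    congr 1
    omega
  have h3 : ∑ j ∈ Finset.range (2*m+1), (2*m).choose j
      = ∑ j ∈ Finset.range (m+1), (2*m).choose j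
        + ∑ i ∈ Finset.range m, (2*m).choose (m + 1 + i) := by
    have e : 2*m+1 = (m+1) + m := by omega
    rw [e, Finset.sum_range_add]
  omega


lemma stmt2Aux_sInt (m : ℕ) :
    ∑ j ∈ Finset.range (2*m+1), |(2*m+1:ℤ) - 2*j| * (2*m).choose j
      = (2*m+1) * (2*m).choose m := by
  have hsplit : ∀ f : ℕ → ℤ, ∑ j ∈ Finset.range (2*m+1), f j
      = ∑ j ∈ Finset.Ico 0 (m+1), f j + ∑ j ∈ Finset.Ico (m+1) (2*m+1), f j := by
    intro f
    rw [Finset.sum_Ico_consecutive _ (Nat.zero_le (m+1)) (by omega), ← Finset.range_eq_Ico]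
  rw [hsplit]
  simp only [← Finset.range_eq_Ico]
  have h1 : ∑ j ∈ Finset.range (m+1), |(2*m+1:ℤ) - 2*j| * (2*m).choose j
      = ∑ j ∈ Finset.range (m+1), ((2*m+1:ℤ) - 2*j) * (2*m).choose j := by
    refine Finset.sum_congr rfl fun j hj => ?_
    rw [Finset.mem_range] at hj
    have : (j:ℤ) ≤ m := by exact_mod_cast Nat.lt_succ_iff.mp hj
    rw [abs_of_nonneg (by push_cast; linarith)]
  have h2 : ∑ j ∈ Finset.Ico (m+1) (2*m+1), |(2*m+1:ℤ) - 2*j| * (2*m).choose j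
      = -∑ j ∈ Finset.Ico (m+1) (2*m+1), ((2*m+1:ℤ) - 2*j) * (2*m).choose j := by
    rw [← Finset.sum_neg_distrib]
    refine Finset.sum_congr rfl fun j hj => ?_
    rw [Finset.mem_Ico] at hj
    have : (m:ℤ) + 1 ≤ j := by exact_mod_cast hj.1
    rw [abs_of_nonpos (by push_cast; linarith)]
    ring
  rw [h1, h2]
  -- A := first-half signed sum, T := total signed sum
  have hA : ∑ j ∈ Finset.range (m+1), ((2*m+1:ℤ) - 2*j) * (2*m).choose j
      = (m+1) * (2*m).choose (m+1) + ∑ j ∈ Finset.range (m+1), ((2*m).choose j : ℤ) := by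
    rw [← stmt2Aux_tele (2*m) m, ← Finset.sum_add_distrib]
    refine Finset.sum_congr rfl fun j _ => ?_
    push_cast; ring
  have hT : ∑ j ∈ Finset.range (2*m+1), ((2*m+1:ℤ) - 2*j) * (2*m).choose j
      = ∑ j ∈ Finset.range (2*m+1), ((2*m).choose j : ℤ) := by
    have h := stmt2Aux_tele (2*m) (2*m)
    rw [Nat.choose_eq_zero_of_lt (by omega), Nat.cast_zero, mul_zero] at h
    calc ∑ j ∈ Finset.range (2*m+1), ((2*m+1:ℤ) - 2*j) * (2*m).choose j
        = ∑ j ∈ Finset.range (2*m+1), (((2*m:ℤ) - 2*j) * (2*m).choose j + (2*m).choose j) := by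
          refine Finset.sum_congr rfl fun j _ => by push_cast; ring
      _ = ∑ j ∈ Finset.range (2*m+1), ((2*m).choose j : ℤ) := by
          push_cast at h
          rw [Finset.sum_add_distrib, h, zero_add]
  have hTsplit := hsplit (fun j => ((2*m+1:ℤ) - 2*j) * (2*m).choose j)
  rw [← Finset.range_eq_Ico] at hTsplit
  -- second signed sum = T - A
  have hB : ∑ j ∈ Finset.Ico (m+1) (2*m+1), ((2*m+1:ℤ) - 2*j) * (2*m).choose j
      = ∑ j ∈ Finset.range (2*m+1), ((2*m).choose j : ℤ)
        - ((m+1) * (2*m).choose (m+1) + ∑ j ∈ Finset.range (m+1), ((2*m).choose j : ℤ)) := by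
    rw [← hA, ← hT]; linarith [hTsplit]
  rw [hA, hB]
  have hstmt2Aux_key := stmt2Aux_key (2*m) m
  have hhalf : (2:ℤ) * ∑ j ∈ Finset.range (m+1), ((2*m).choose j : ℤ)
      = (2*m).choose m + ∑ j ∈ Finset.range (2*m+1), ((2*m).choose j : ℤ) := by
    exact_mod_cast congrArg (Nat.cast : ℕ → ℤ) (stmt2Aux_halfsum m)
  push_cast at hstmt2Aux_key hhalf ⊢
  nlinarith [hstmt2Aux_key, hhalf]



/-- for odd `N ≥ 3`, the number of stationary points satisfies
`Σ_{j=0}^{N-1} |N - 2j| C(N-1, j) = N! / (((N-1)/2)!)²`. -/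
theorem stmt2 (N : ℕ) (hN : 3 ≤ N) (hodd : Odd N) :
    ∑ j ∈ Finset.range N, |(N : ℝ) - 2 * j| * ((N - 1).choose j : ℝ) =
      (N.factorial : ℝ) / (((N - 1) / 2).factorial : ℝ) ^ 2 := by
  obtain ⟨m, hm⟩ := hodd
  subst hm
  have e1 : 2*m+1-1 = 2*m := by omega
  have e2 : (2*m)/2 = m := by omega
  rw [e1, e2]
  have hL : ∑ j ∈ Finset.range (2*m+1), |((2*m+1 : ℕ) : ℝ) - 2 * j| * ((2*m).choose j : ℝ)
      = ((2*m+1) * (2*m).choose m : ℝ) := by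
    have := congrArg (Int.cast : ℤ → ℝ) (stmt2Aux_sInt m)
    push_cast at this ⊢
    exact this
  rw [hL]
  have hfac : ((2*m).choose m) * m.factorial * m.factorial = (2*m).factorial := by
    have := Nat.choose_mul_factorial_mul_factorial (show m ≤ 2*m by omega)
    simpa [show 2*m - m = m by omega] using this
  have hfac' : (((2*m).choose m : ℝ)) * (m.factorial : ℝ) * (m.factorial : ℝ)
      = ((2*m).factorial : ℝ) := by exact_mod_cast congrArg (Nat.cast : ℕ → ℝ) hfac
  have hsucc : ((2*m+1).factorial : ℝ) = (2*m+1) * ((2*m).factorial : ℝ) := by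
    exact_mod_cast congrArg (Nat.cast : ℕ → ℝ) (Nat.factorial_succ (2*m))
  have hne : (m.factorial : ℝ) ≠ 0 := by positivity
  rw [hsucc]
  field_simp
  push_cast
  nlinarith [hfac']
end

section
/- Let N ≥ 2 and let c_1,…,c_N be real numbers, with the convention c_0 := c_N. Let 𝓗 be the (N−1)×(N−1) tridiagonal matrix with entries 𝓗_{ij} = δ_{ij}(c_{i−1} + c_i) − δ_{i−1,j} c_{i−1} − δ_{i+1,j} c_i for i,j = 1,…,N−1. Then det 𝓗 = Σ_{j=1}^{N} Π_{k=1, k≠j}^{N} c_k. -/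
open Real Filter

namespace Stmt6Proof

open Matrix Finset

/-- rank-one (constant) plus diagonal matrix -/
noncomputable def Ematrix (n : ℕ) (x : ℝ) (d : Fin n → ℝ) : Matrix (Fin n) (Fin n) ℝ :=
  Matrix.of fun i j => x + if i = j then d i else 0

/-- lower bidiagonal difference matrix -/
noncomputable def Pmat (m : ℕ) : Matrix (Fin m) (Fin m) ℝ :=
  Matrix.of fun i j => (if i = j then 1 else 0) - (if (i:ℕ) = (j:ℕ)+1 then 1 else 0)

/-- `c` extended to `ℕ` by zero -/
noncomputable def Dfun (N : ℕ) (c : Fin N → ℝ) : ℕ → ℝ :=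
  fun k => if h : k < N then c ⟨k, h⟩ else 0

lemma detE_ne (n : ℕ) (x : ℝ) (d : Fin n → ℝ) (hd : ∀ i, d i ≠ 0) :
    (Ematrix n x d).det = ∏ i, d i + x * ∑ j, ∏ k ∈ Finset.univ.erase j, d k := by
  have hrw : Ematrix n x d =
      Matrix.diagonal d +
        Matrix.replicateCol Unit (fun _ : Fin n => x) * Matrix.replicateRow Unit (fun _ : Fin n => (1:ℝ)) := by
    ext i j
    simp [Ematrix, Matrix.diagonal_apply, Matrix.mul_apply, Matrix.replicateCol, Matrix.replicateRow, add_comm]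
  have hA : IsUnit (Matrix.diagonal d).det := by
    rw [Matrix.det_diagonal]
    exact (Finset.prod_ne_zero_iff.2 fun i _ => hd i).isUnit
  rw [hrw, Matrix.det_add_replicateCol_mul_replicateRow hA]
  rw [Matrix.det_diagonal, Matrix.det_unique]
  have hinv : (Matrix.diagonal d)⁻¹ = Matrix.diagonal (fun i => (d i)⁻¹) := by
    apply Matrix.inv_eq_right_inv
    rw [Matrix.diagonal_mul_diagonal, ← Matrix.diagonal_one]
    ext i j
    rcases eq_or_ne i j with h|h
    · subst h; simp [mul_inv_cancel₀ (hd i)]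
    · simp [Matrix.diagonal_apply_ne _ h, Matrix.one_apply_ne h]
  rw [hinv]
  simp [Matrix.mul_apply, Matrix.diagonal_apply]
  rw [mul_add, mul_one, Finset.mul_sum, Finset.mul_sum]
  congr 1
  refine Finset.sum_congr rfl fun j _ => ?_
  rw [← mul_assoc, ← Finset.prod_erase_mul Finset.univ d (Finset.mem_univ j)]
  have h0 := hd j
  field_simp

lemma detE (n : ℕ) (x : ℝ) (d : Fin n → ℝ) :
    (Ematrix n x d).det = ∏ i, d i + x * ∑ j, ∏ k ∈ Finset.univ.erase j, d k := by
  set f : ℝ → ℝ := fun t => (Ematrix n x (fun i => d i + t)).det with hf_def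
  set g : ℝ → ℝ := fun t =>
    ∏ i, (d i + t) + x * ∑ j, ∏ k ∈ Finset.univ.erase j, (d k + t) with hg_def
  have hf : Continuous f := by
    apply Continuous.matrix_det
    apply continuous_matrix
    intro i j
    simp only [Ematrix, Matrix.of_apply]
    split_ifs <;> fun_prop
  have hg : Continuous g := by
    apply Continuous.add
    · apply continuous_finset_prod
      intro i _
      fun_prop
    · apply Continuous.mul continuous_const
      apply continuous_finset_sum
      intro j _
      apply continuous_finset_prod
      intro k _
      fun_prop
  have hdense : Dense {t : ℝ | ∀ i, d i + t ≠ 0} := by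
    have hfin : (Set.range fun i => -d i).Countable := (Set.finite_range _).countable
    refine Dense.mono ?_ (hfin.dense_compl ℝ)
    intro t ht i
    intro h
    exact ht ⟨i, show -d i = t by linarith⟩
  have heq : f = g := by
    refine Continuous.ext_on hdense hf hg ?_
    intro t ht
    exact detE_ne n x _ ht
  have h0 := congrFun heq 0
  simpa [f, g] using h0

lemma detP (m : ℕ) : (Pmat m).det = 1 := by
  have h : (Pmat m).BlockTriangular OrderDual.toDual := by
    intro i j hij
    have hij' : (i:ℕ) < (j:ℕ) := hij
    simp only [Pmat, Matrix.of_apply]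
    have h1 : ¬ i = j := fun hc => by subst hc; omega
    have h2 : ¬ (i:ℕ) = (j:ℕ)+1 := by omega
    rw [if_neg h1, if_neg h2]
    ring
  rw [Matrix.det_of_lowerTriangular _ h]
  refine Finset.prod_eq_one fun i _ => ?_
  simp only [Pmat, Matrix.of_apply]
  rw [if_neg (by omega : ¬ (i:ℕ) = (i:ℕ)+1)]
  simp

lemma sum_ite_pred {m : ℕ} (i : Fin m) (v : Fin m → ℝ) :
    ∑ r : Fin m, (if (i:ℕ) = (r:ℕ)+1 then v r else 0) =
      if h : 0 < (i:ℕ) then v ⟨(i:ℕ)-1, by omega⟩ else 0 := by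
  split_ifs with h
  · rw [Finset.sum_eq_single (⟨(i:ℕ)-1, by omega⟩ : Fin m)]
    · rw [if_pos (by simp; omega)]
    · intro r _ hr
      rw [if_neg]
      intro hc
      exact hr (Fin.ext (by simp; omega))
    · simp
  · refine Finset.sum_eq_zero fun r _ => if_neg (by omega)

lemma mulP_left {m : ℕ} (A : Matrix (Fin m) (Fin m) ℝ) (i j : Fin m) :
    (Pmat m * A) i j = A i j - (if h : 0 < (i:ℕ) then A ⟨(i:ℕ)-1, by omega⟩ j else 0) := by
  rw [Matrix.mul_apply]
  simp only [Pmat, Matrix.of_apply, sub_mul, ite_mul, one_mul, zero_mul]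
  rw [Finset.sum_sub_distrib, Finset.sum_ite_eq Finset.univ i (fun r => A r j)]
  simp only [Finset.mem_univ, if_true]
  congr 1
  exact sum_ite_pred i (fun r => A r j)

lemma mulP_right {m : ℕ} (A : Matrix (Fin m) (Fin m) ℝ) (i j : Fin m) :
    (A * (Pmat m)ᵀ) i j = A i j - (if h : 0 < (j:ℕ) then A i ⟨(j:ℕ)-1, by omega⟩ else 0) := by
  rw [Matrix.mul_apply]
  simp only [Pmat, Matrix.transpose_apply, Matrix.of_apply, mul_sub, mul_ite, mul_one, mul_zero]
  rw [Finset.sum_sub_distrib, Finset.sum_ite_eq Finset.univ j (fun s => A i s)]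
  simp only [Finset.mem_univ, if_true]
  congr 1
  exact sum_ite_pred j (fun s => A i s)

lemma keyfact (N : ℕ) (hN : 2 ≤ N) (c : Fin N → ℝ) :
    hessC N (Nat.lt_of_lt_of_le Nat.zero_lt_two hN) c =
      Pmat (N-1) * Ematrix (N-1) (Dfun N c (N-1)) (fun i => Dfun N c (i:ℕ)) * (Pmat (N-1))ᵀ := by
  have hc : ∀ (v : ℕ) (h : v < N), c ⟨v, h⟩ = Dfun N c v := by
    intro v h; simp [Dfun, dif_pos h]
  ext i j
  rw [mulP_right]
  simp only [mulP_left]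
  have hmod : ((i:ℕ) + (N-1)) % N = if 0 < (i:ℕ) then (i:ℕ) - 1 else N - 1 := by
    split_ifs with h
    · have e : (i:ℕ) + (N-1) = ((i:ℕ)-1) + N := by omega
      rw [e, Nat.add_mod_right, Nat.mod_eq_of_lt (by omega)]
    · have e : (i:ℕ) = 0 := by omega
      rw [e, zero_add, Nat.mod_eq_of_lt (by omega)]
  simp only [hessC, Ematrix, Matrix.of_apply, hc, hmod, Fin.ext_iff, Fin.val_mk]
  have hi := i.isLt
  have hj := j.isLt
  by_cases h1 : (i:ℕ) = (j:ℕ)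
  · rw [h1]
    split_ifs <;> (first | ring1 | (exfalso; omega))
  · by_cases h3 : (i:ℕ) = (j:ℕ)+1
    · simp only [h3, Nat.add_sub_cancel]
      split_ifs <;> (first | ring1 | (exfalso; omega))
    · split_ifs <;> (first | ring1 | (exfalso; omega))

lemma herase {n : ℕ} (f : Fin n → ℝ) (j : Fin n) :
    ∏ k ∈ Finset.univ.erase j, f k = ∏ k, (if k = j then 1 else f k) := by
  rw [← Finset.mul_prod_erase Finset.univ (fun k => if k = j then 1 else f k)
    (Finset.mem_univ j), if_pos rfl, one_mul]
  exact Finset.prod_congr rfl fun k hk => (if_neg (Finset.ne_of_mem_erase hk)).symm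

lemma split (M : ℕ) (g : Fin (M+1) → ℝ) :
    ∑ j : Fin (M+1), ∏ k, (if k = j then 1 else g k)
    = ∏ i : Fin M, g i.castSucc
      + g (Fin.last M) * ∑ j : Fin M, ∏ k : Fin M, (if k = j then 1 else g k.castSucc) := by
  rw [Fin.sum_univ_castSucc]
  have h1 : ∀ j : Fin M, (∏ k : Fin (M+1), if k = j.castSucc then 1 else g k)
      = (∏ k : Fin M, if k = j then 1 else g k.castSucc) * g (Fin.last M) := by
    intro j
    rw [Fin.prod_univ_castSucc]
    congr 1
    · exact Finset.prod_congr rfl fun k _ => if_congr Fin.castSucc_inj rfl rfl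
    · rw [if_neg (Fin.castSucc_lt_last j).ne']
  have h2 : (∏ k : Fin (M+1), if k = Fin.last M then 1 else g k)
      = ∏ i : Fin M, g i.castSucc := by
    rw [Fin.prod_univ_castSucc, if_pos rfl, mul_one]
    exact Finset.prod_congr rfl fun k _ => if_neg (Fin.castSucc_lt_last k).ne
  simp only [h1, h2]
  rw [← Finset.sum_mul, add_comm, mul_comm]

lemma final (N : ℕ) (hN : 2 ≤ N) (c : Fin N → ℝ) :
    (∏ i : Fin (N-1), Dfun N c (i:ℕ))
      + Dfun N c (N-1) * ∑ j : Fin (N-1), ∏ k ∈ Finset.univ.erase j, Dfun N c (k:ℕ)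
    = ∑ j : Fin N, ∏ k ∈ Finset.univ.erase j, c k := by
  have hMN : (N-1)+1 = N := by omega
  let e : Fin ((N-1)+1) ≃ Fin N := finCongr hMN
  have hg1 : ∀ i : Fin (N-1), c (e i.castSucc) = Dfun N c (i:ℕ) := by
    intro i
    have hv : (i:ℕ) < N := by omega
    rw [Dfun]
    simp only [dif_pos hv]
    congr 1
  have hg2 : c (e (Fin.last (N-1))) = Dfun N c (N-1) := by
    have hv : N-1 < N := by omega
    rw [Dfun]
    simp only [dif_pos hv]
    congr 1
  have hsum : ∑ j : Fin N, ∏ k ∈ Finset.univ.erase j, c k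
      = ∑ j : Fin ((N-1)+1), ∏ k : Fin ((N-1)+1), (if k = j then 1 else c (e k)) := by
    refine (Fintype.sum_equiv e _ _ ?_).symm
    intro j
    rw [herase]
    refine Fintype.prod_equiv e _ _ ?_
    intro k
    exact if_congr (by simp) rfl rfl
  rw [hsum, split]
  simp only [hg1, hg2]
  congr 1
  · congr 1
    refine Finset.sum_congr rfl fun j _ => ?_
    rw [herase]

end Stmt6Proof

/-- the determinant of the `(N-1) × (N-1)` tridiagonal matrix with
entries `δ_{ij}(c_{i-1} + c_i) - δ_{i-1,j} c_{i-1} - δ_{i+1,j} c_i` (with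
`c_0 := c_N`) equals `Σ_{j=1}^N Π_{k ≠ j} c_k`. -/


theorem stmt6 (N : ℕ) (hN : 2 ≤ N) (c : Fin N → ℝ) :
    (hessC N (by omega) c).det = ∑ j : Fin N, ∏ k ∈ Finset.univ.erase j, c k := by
  have h := Stmt6Proof.keyfact N hN c
  rw [h, Matrix.det_mul, Matrix.det_mul, Stmt6Proof.detP, Matrix.det_transpose,
    Stmt6Proof.detP, one_mul, mul_one, Stmt6Proof.detE]
  exact Stmt6Proof.final N hN c
end

section
/- Let N ≥ 4 be even and φ ∈ ℝ^N. If θ is a stationary point of F_φ (with θ_N = 0), then the configuration θ′ defined by θ′_k = θ_k + kπ for k = 1,…,N−1 (and θ′_N = 0, which agrees with θ_N + Nπ modulo 2π since N is even) is also a stationary point of F_φ, its variables satisfy s′_k = s_k + π for all k, and the Hessian determinants have opposite signs: det 𝓗(θ′) = − det 𝓗(θ). -/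
open Real Filter

section Aux

variable {N : ℕ}

private lemma cos_flip (x : ℝ) (m : ℤ) : Real.cos (x + π + 2 * π * m) = -Real.cos x := by
  have h : x + π + 2 * π * m = (x + π) + (m : ℝ) * (2 * π) := by ring
  rw [h, Real.cos_add_int_mul_two_pi, Real.cos_add_pi]

private lemma sVar_shift (hN0 : 0 < N) (φ u d : Fin N → ℝ) (j : Fin N) :
    sVar N hN0 φ (fun i => u i + d i) j
      = sVar N hN0 φ u j + (d ⟨((j : ℕ) + 1) % N, Nat.mod_lt _ hN0⟩ - d j) := by
  simp only [sVar]; ring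

end Aux

/-- for even `N`, shifting a stationary point by `θ'_k = θ_k + kπ`
(`k = 1, …, N-1`, and `θ'_N = 0`) yields another stationary point whose variables
satisfy `s'_k = s_k + π (mod 2π)` for all `k`, and whose Hessian determinant has
the opposite sign: `det 𝓗(θ') = - det 𝓗(θ)`. -/
theorem stmt10 (N : ℕ) (hN : 4 ≤ N) (heven : Even N) (φ θ : Fin N → ℝ)
    (hlast : θ (lastIdx N (by omega)) = 0)
    (hstat : IsStationaryPt N (by omega) φ θ) :
    let θ' : Fin N → ℝ := fun j =>
      if j = lastIdx N (by omega) then 0 else θ j + ((j : ℕ) + 1) * π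
    IsStationaryPt N (by omega) φ θ' ∧
    (∀ k : Fin N, ∃ m : ℤ,
      sVar N (by omega) φ θ' k = sVar N (by omega) φ θ k + π + 2 * π * m) ∧
    (hessAt N (by omega) φ θ').det = -(hessAt N (by omega) φ θ).det := by
  intro θ'
  have hN0 : 0 < N := by omega
  -- the shift vector
  set d : Fin N → ℝ := fun i =>
    if i = lastIdx N hN0 then 0 else ((i : ℕ) + 1) * π with hd
  have hlastval : (lastIdx N hN0 : ℕ) = N - 1 := rfl
  have hθ' : ∀ i, θ' i = θ i + d i := by
    intro i
    by_cases hi : i = lastIdx N hN0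
    · simp [θ', hd, hi, hlast]
    · simp only [θ', hd, if_neg hi]
  -- the shift in each s-variable is π mod 2π
  have hdshift : ∀ j : Fin N, ∃ m : ℤ,
      d ⟨((j : ℕ) + 1) % N, Nat.mod_lt _ hN0⟩ - d j = π + 2 * π * m := by
    intro j
    set j' : Fin N := ⟨((j : ℕ) + 1) % N, Nat.mod_lt _ hN0⟩ with hj'
    have hv : (j' : ℕ) = ((j : ℕ) + 1) % N := rfl
    by_cases hj : (j : ℕ) = N - 1
    · refine ⟨0, ?_⟩
      have hjl : j = lastIdx N hN0 := Fin.ext hj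
      have h1 : ((j : ℕ) + 1) % N = 0 := by
        rw [hj, Nat.sub_add_cancel (by omega : 1 ≤ N), Nat.mod_self]
      have h0 : j' ≠ lastIdx N hN0 := by
        intro h
        have h2 : ((j : ℕ) + 1) % N = N - 1 := congrArg Fin.val h
        omega
      simp only [hd, if_neg h0, if_pos hjl, hv, h1]
      norm_num
    · have hjlt : (j : ℕ) < N - 1 := by have := j.isLt; omega
      have h1 : ((j : ℕ) + 1) % N = (j : ℕ) + 1 := Nat.mod_eq_of_lt (by omega)
      have hjne : j ≠ lastIdx N hN0 := fun h => hj (congrArg Fin.val h)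
      by_cases hj1 : (j : ℕ) + 1 = N - 1
      · obtain ⟨t, ht⟩ := heven
        refine ⟨-t, ?_⟩
        have h0 : j' = lastIdx N hN0 :=
          Fin.ext (show ((j : ℕ) + 1) % N = N - 1 by rw [h1, hj1])
        simp only [hd, if_pos h0, if_neg hjne, zero_sub]
        have hjr : ((j : ℕ) : ℝ) = (N : ℝ) - 2 := by
          have h3 : (j : ℕ) = N - 2 := by omega
          rw [h3]
          push_cast [Nat.cast_sub (by omega : 2 ≤ N)]
          ring
        have hNt : (N : ℝ) = 2 * t := by
          have h3 : N = 2 * t := by omega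
          exact_mod_cast h3
        rw [hjr, hNt]
        push_cast
        ring
      · refine ⟨0, ?_⟩
        have h0 : j' ≠ lastIdx N hN0 := by
          intro h
          have h2 : ((j : ℕ) + 1) % N = N - 1 := congrArg Fin.val h
          omega
        simp only [hd, if_neg h0, if_neg hjne, hv, h1]
        push_cast
        ring
  -- s-variables flip cosine
  have hsflip : ∀ (u : Fin N → ℝ) (j : Fin N),
      Real.cos (sVar N hN0 φ (fun i => u i + d i) j) = -Real.cos (sVar N hN0 φ u j) := by
    intro u j
    obtain ⟨m, hm⟩ := hdshift j
    rw [sVar_shift hN0 φ u d j, hm, ← add_assoc, cos_flip]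
  -- the functional flips around 2N
  have hFflip : ∀ u : Fin N → ℝ,
      Fxy N hN0 φ (fun i => u i + d i) = 2 * N - Fxy N hN0 φ u := by
    intro u
    simp only [Fxy]
    have : ∀ j : Fin N, (1 : ℝ) - Real.cos (sVar N hN0 φ (fun i => u i + d i) j)
        = 2 - (1 - Real.cos (sVar N hN0 φ u j)) := by
      intro j; rw [hsflip u j]; ring
    rw [Finset.sum_congr rfl fun j _ => this j, Finset.sum_sub_distrib,
      Finset.sum_const, Finset.card_univ, Fintype.card_fin, nsmul_eq_mul]
    ring
  refine ⟨?_, ?_, ?_⟩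
  · -- stationarity
    intro k hk
    have hkne : k ≠ lastIdx N hN0 := by
      intro h; have := congrArg Fin.val h; rw [hlastval] at this; omega
    have hupd : ∀ t : ℝ, Function.update θ' k t
        = fun i => Function.update θ k (t - d k) i + d i := by
      intro t; funext i
      by_cases hik : i = k
      · subst hik; simp
      · simp [Function.update_of_ne hik, hθ' i]
    have heqfun : (fun t : ℝ => Fxy N hN0 φ (Function.update θ' k t))
        = fun t : ℝ => 2 * N - Fxy N hN0 φ (Function.update θ k (t - d k)) := by
      funext t; rw [hupd t, hFflip]
    show deriv (fun t : ℝ => Fxy N hN0 φ (Function.update θ' k t)) (θ' k) = 0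
    rw [heqfun, deriv_const_sub, hθ' k,
      deriv_comp_sub_const (fun t => Fxy N hN0 φ (Function.update θ k t)) (d k),
      add_sub_cancel_right, hstat k hk, neg_zero]
  · -- s shift
    intro k
    obtain ⟨m, hm⟩ := hdshift k
    refine ⟨m, ?_⟩
    have hfun : θ' = fun i => θ i + d i := funext hθ'
    show sVar N hN0 φ θ' k = sVar N hN0 φ θ k + π + 2 * π * m
    rw [hfun, sVar_shift hN0 φ θ d k, hm]; ring
  · -- Hessian determinant
    have hfun : θ' = fun i => θ i + d i := funext hθ'
    have hMat : hessAt N hN0 φ θ' = -(hessAt N hN0 φ θ) := by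
      ext i j
      simp only [hessAt, hessC, Matrix.of_apply, Matrix.neg_apply, hfun, hsflip θ]
      split_ifs <;> ring
    show (hessAt N hN0 φ θ').det = -(hessAt N hN0 φ θ).det
    rw [hMat, Matrix.det_neg, Fintype.card_fin]
    have hodd : Odd (N - 1) := by
      obtain ⟨t, ht⟩ := heven; exact ⟨t - 1, by omega⟩
    rw [hodd.neg_one_pow]; ring
end
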